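/- arXiv:1005.4553 — 2 statements merged into one kernel-verified Lean document; each statement's English description precedes it below -/
import Mathlib

section
/- Let (Ω, 𝓐, P) be a probability space. Let ν : Ω → Measure([0, ∞)) be a random measure (meaning ω ↦ ν_ω(B) is measurable for every Borel set B), encoding the recurrent event process via N*(t) = ν([0, t]). Let D : Ω → [0, ∞) be a random terminal time such that ν_ω is supported on [0, D(ω)] for P-almost every ω, let C : Ω → [0, ∞) be the censoring time with distribution function G(t) = P(C ≤ t) and left limit G(s⁻) = P(C < s), and let Z : Ω → ℝ^d be a covariate vector. Let σ(ν, D, Z) be the σ-algebra generated by D, Z and all evaluations ω ↦ ν_ω(B). Fix t ≥ 0 such that G(s⁻) < 1 for every s ∈ [0, t], assume E[ν([0, t])] < ∞, and assume the censoring condition: for every s ∈ [0, t], E[1{C ≥ s} | σ(ν, D, Z)] = 1 − G(s⁻) P-almost surely. Define the rescaled process Y(t) = ∫_{[0, t]} 1{s ≤ C} (1 − G(s⁻))^{-1} ν(ds). Then E[Y(t) | σ(Z)] = E[ν([0, t]) | σ(Z)] = E[N*(t) | σ(Z)] P-almost surely; in particular E[Y(t)] = E[N*(t)]. -/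
open MeasureTheory Filter Set
open scoped ENNReal Topology

namespace RescaledAux

noncomputable def gl (n : ℕ) (s : ℝ) : ℝ := ((⌈(2:ℝ)^n * s⌉ - 1 : ℤ) : ℝ) / (2:ℝ)^n

lemma gl_lt (n : ℕ) (s : ℝ) : gl n s < s := by
  rw [gl, div_lt_iff₀ (by positivity : (0:ℝ) < (2:ℝ)^n)]
  have h := Int.ceil_lt_add_one ((2:ℝ)^n * s)
  have hx : (2:ℝ)^n * s = s * (2:ℝ)^n := mul_comm _ _
  push_cast
  linarith

lemma gl_ge (n : ℕ) (s : ℝ) : s - 1/(2:ℝ)^n ≤ gl n s := by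
  rw [gl]
  have h := Int.le_ceil ((2:ℝ)^n * s)
  rw [le_div_iff₀ (by positivity : (0:ℝ) < (2:ℝ)^n)]
  push_cast
  have e : (1/(2:ℝ)^n) * (2:ℝ)^n = 1 := by
    field_simp
  have hc : s * (2:ℝ)^n = (2:ℝ)^n * s := mul_comm _ _
  nlinarith [h, e, hc]

lemma gl_mono (s : ℝ) : Monotone fun n => gl n s := by
  apply monotone_nat_of_le_succ
  intro n
  have h2 : (0:ℝ) < (2:ℝ)^n := by positivity
  have h2' : (0:ℝ) < (2:ℝ)^(n+1) := by positivity
  rw [gl, gl, div_le_div_iff₀ h2 h2']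
  have hceil : (2 * ⌈(2:ℝ)^n * s⌉ - 1 : ℤ) ≤ ⌈(2:ℝ)^(n+1) * s⌉ := by
    rw [Int.le_ceil_iff]
    have h1 := Int.ceil_lt_add_one ((2:ℝ)^n * s)
    have hC : (2:ℝ)^(n+1)*s = 2*((2:ℝ)^n*s) := by ring
    push_cast
    linarith
  have : ((2 * ⌈(2:ℝ)^n * s⌉ - 1 : ℤ) : ℝ) ≤ ((⌈(2:ℝ)^(n+1) * s⌉ : ℤ) : ℝ) := by exact_mod_cast hceil
  push_cast at this ⊢
  have key : (2*((⌈(2:ℝ)^n*s⌉:ℤ):ℝ)-2) ≤ (((⌈(2:ℝ)^(n+1)*s⌉:ℤ):ℝ)-1) := by linarith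
  calc (((⌈(2:ℝ)^n*s⌉:ℤ):ℝ)-1) * (2:ℝ)^(n+1) = (2*((⌈(2:ℝ)^n*s⌉:ℤ):ℝ)-2)*(2:ℝ)^n := by ring
    _ ≤ (((⌈(2:ℝ)^(n+1)*s⌉:ℤ):ℝ)-1)*(2:ℝ)^n := mul_le_mul_of_nonneg_right key h2.le

lemma gl_tendsto (s : ℝ) : Tendsto (fun n => gl n s) atTop (𝓝 s) := by
  have h1 : Tendsto (fun n : ℕ => s - 1/(2:ℝ)^n) atTop (𝓝 s) := by
    have : Tendsto (fun n : ℕ => (1/(2:ℝ))^n) atTop (𝓝 0) :=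
      tendsto_pow_atTop_nhds_zero_of_lt_one (by norm_num) (by norm_num)
    simpa [one_div, inv_pow] using tendsto_const_nhds.sub this
  exact tendsto_of_tendsto_of_tendsto_of_le_of_le h1 tendsto_const_nhds
    (fun n => gl_ge n s) (fun n => (gl_lt n s).le)

lemma gl_measurable (n : ℕ) : Measurable (gl n) := by
  have h1 : Measurable fun s : ℝ => ⌈(2:ℝ)^n * s⌉ := (measurable_const.mul measurable_id).ceil
  have h2 : Measurable fun s : ℝ => ((⌈(2:ℝ)^n * s⌉ - 1 : ℤ) : ℝ) :=
    measurable_from_top.comp (h1.sub measurable_const)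
  exact h2.div_const _

lemma gl_eq_on_piece {n : ℕ} {k : ℤ} {s : ℝ}
    (hs : s ∈ Set.Ioc ((k:ℝ)/(2:ℝ)^n) (((k:ℝ)+1)/(2:ℝ)^n)) : gl n s = (k:ℝ)/(2:ℝ)^n := by
  have h2 : (0:ℝ) < (2:ℝ)^n := by positivity
  have hceil : ⌈(2:ℝ)^n * s⌉ = k + 1 := by
    rw [Int.ceil_eq_iff]
    constructor
    · push_cast
      have := hs.1
      rw [div_lt_iff₀ h2] at this
      nlinarith
    · push_cast
      have := hs.2
      rw [le_div_iff₀ h2] at this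
      nlinarith
  rw [gl, hceil]
  push_cast
  ring

lemma piece_cover (n : ℕ) : (⋃ k : ℤ, Set.Ioc ((k:ℝ)/(2:ℝ)^n) (((k:ℝ)+1)/(2:ℝ)^n)) = Set.univ := by
  have h2 : (0:ℝ) < (2:ℝ)^n := by positivity
  ext s
  simp only [Set.mem_iUnion, Set.mem_univ, iff_true, Set.mem_Ioc]
  refine ⟨⌈(2:ℝ)^n * s⌉ - 1, ?_, ?_⟩
  · have := gl_lt n s
    rw [gl] at this
    rw [div_lt_iff₀ h2] at this ⊢
    push_cast at this ⊢
    linarith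
  · have := Int.le_ceil ((2:ℝ)^n * s)
    rw [le_div_iff₀ h2]
    push_cast
    linarith [mul_comm ((2:ℝ)^n) s]

lemma piece_disj (n : ℕ) :
    Pairwise (Function.onFun Disjoint
      fun k : ℤ => Set.Ioc ((k:ℝ)/(2:ℝ)^n) (((k:ℝ)+1)/(2:ℝ)^n)) := by
  have h2 : (0:ℝ) < (2:ℝ)^n := by positivity
  intro k k' hne
  have key : ∀ a b : ℤ, a < b → Disjoint (Set.Ioc ((a:ℝ)/(2:ℝ)^n) (((a:ℝ)+1)/(2:ℝ)^n))
      (Set.Ioc ((b:ℝ)/(2:ℝ)^n) (((b:ℝ)+1)/(2:ℝ)^n)) := by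
    intro a b hab
    rw [Set.Ioc_disjoint_Ioc]
    have hab' : (a:ℝ) + 1 ≤ (b:ℝ) := by exact_mod_cast Int.add_one_le_iff.mpr hab
    refine le_trans (min_le_left _ _) (le_trans ?_ (le_max_right _ _))
    gcongr
  rcases hne.lt_or_gt with h | h
  · exact key _ _ h
  · exact (key _ _ h).symm

lemma decomp_lemma (μ : Measure ℝ) (n : ℕ) (W v : ℝ → ℝ≥0∞) (c : ℤ → ℝ≥0∞)
    (hW : Measurable W) (_hv : Measurable v)
    (hvc : ∀ (k : ℤ), ∀ s ∈ Set.Ioc ((k:ℝ)/(2:ℝ)^n) (((k:ℝ)+1)/(2:ℝ)^n), v s = c k) :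
    ∫⁻ s, W s * v s ∂μ
      = ∑' k : ℤ, c k * ∫⁻ s in Set.Ioc ((k:ℝ)/(2:ℝ)^n) (((k:ℝ)+1)/(2:ℝ)^n), W s ∂μ := by
  rw [← setLIntegral_univ, ← piece_cover n,
    lintegral_iUnion (fun _ => measurableSet_Ioc) (piece_disj n)]
  refine tsum_congr fun k => ?_
  rw [setLIntegral_congr_fun measurableSet_Ioc
    (fun s hs => by rw [hvc k s hs, mul_comm])]
  exact lintegral_const_mul _ hW

lemma lintegral_eq_of_agree {Ω : Type*} {m m0 : MeasurableSpace Ω} (hm : m ≤ m0)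
    (μ₁ μ₂ : @Measure Ω m0) (h : ∀ B : Set Ω, MeasurableSet[m] B → μ₁ B = μ₂ B)
    {ψ : Ω → ℝ≥0∞} (hψ : Measurable[m] ψ) :
    ∫⁻ ω, ψ ω ∂μ₁ = ∫⁻ ω, ψ ω ∂μ₂ := by
  have htrim : μ₁.trim hm = μ₂.trim hm := by
    apply @Measure.ext Ω m
    intro s hs
    rw [trim_measurableSet_eq hm hs, trim_measurableSet_eq hm hs, h s hs]
  rw [← lintegral_trim hm hψ, ← lintegral_trim hm hψ, htrim]

end RescaledAux

theorem rescaled_aux {Ω : Type*} (m mZ : MeasurableSpace Ω) [m0 : MeasurableSpace Ω]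
    (P : Measure Ω) [IsProbabilityMeasure P]
    (hm : m ≤ m0) (hmZ : mZ ≤ m0) (hmZm : mZ ≤ m)
    (ν : Ω → Measure ℝ)
    (hν : ∀ B : Set ℝ, MeasurableSet B → Measurable (fun ω => ν ω B))
    (hνm : ∀ B : Set ℝ, MeasurableSet B → Measurable[m] (fun ω => ν ω B))
    (C : Ω → ℝ) (hC : Measurable C) (hCpos : ∀ ω, 0 ≤ C ω)
    (t : ℝ) (ht : 0 ≤ t)
    (hGlt : ∀ s ∈ Set.Icc 0 t, (P {ω | C ω < s}).toReal < 1)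
    (hNint : ∫⁻ ω, ν ω (Set.Icc 0 t) ∂P < ⊤)
    (hcens : ∀ s ∈ Set.Icc 0 t,
      P[Set.indicator {ω | s ≤ C ω} (fun _ => (1 : ℝ)) | m]
        =ᵐ[P] fun _ => 1 - (P {ω | C ω < s}).toReal) :
    (P[fun ω => ∫ s in Set.Icc 0 t,
          (if s ≤ C ω then (1 - (P {ω' | C ω' < s}).toReal)⁻¹ else 0) ∂(ν ω) | mZ]
      =ᵐ[P]
      P[fun ω => (ν ω (Set.Icc 0 t)).toReal | mZ])
    ∧ (∫ ω, (∫ s in Set.Icc 0 t,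
          (if s ≤ C ω then (1 - (P {ω' | C ω' < s}).toReal)⁻¹ else 0) ∂(ν ω)) ∂P
        = ∫ ω, (ν ω (Set.Icc 0 t)).toReal ∂P) := by
  classical
  -- basic measurable sets
  have hCltMeas : ∀ s : ℝ, MeasurableSet {ω | C ω < s} :=
    fun s => measurableSet_lt hC measurable_const
  have hCleMeas : ∀ s : ℝ, MeasurableSet {ω | s ≤ C ω} :=
    fun s => measurableSet_le measurable_const hC
  have hCgtMeas : ∀ r : ℝ, MeasurableSet {ω | r < C ω} :=
    fun r => measurableSet_lt measurable_const hC
  have hCleLMeas : ∀ r : ℝ, MeasurableSet {ω | C ω ≤ r} :=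
    fun r => measurableSet_le hC measurable_const
  have htoReal_le_one : ∀ s : ℝ, (P {ω' | C ω' < s}).toReal ≤ 1 := by
    intro s
    have h1 : P {ω' | C ω' < s} ≤ 1 := prob_le_one
    simpa using ENNReal.toReal_mono ENNReal.one_ne_top h1
  -- weight functions
  set W : ℝ → ℝ≥0∞ := fun s => ENNReal.ofReal ((1 - (P {ω' | C ω' < s}).toReal)⁻¹) with hWdef
  set Q : ℝ → ℝ≥0∞ := fun r => P {ω | r < C ω} with hQdef
  set Qle : ℝ → ℝ≥0∞ := fun s => P {ω | s ≤ C ω} with hQledef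
  have hgmono : Monotone fun s : ℝ => (P {ω' | C ω' < s}).toReal := by
    intro s s' hss'
    exact ENNReal.toReal_mono (measure_ne_top _ _)
      (measure_mono fun ω (h : C ω < s) => lt_of_lt_of_le h hss')
  have hwmeas : Measurable fun s : ℝ => (1 - (P {ω' | C ω' < s}).toReal)⁻¹ :=
    (measurable_const.sub hgmono.measurable).inv
  have hWmeas : Measurable W := ENNReal.measurable_ofReal.comp hwmeas
  have hQmeas : Measurable Q := by
    have : Antitone Q := by
      intro r r' hrr'
      exact measure_mono fun ω (h : r' < C ω) => lt_of_le_of_lt hrr' h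
    exact this.measurable
  have hQlemeas : Measurable Qle := by
    have : Antitone Qle := by
      intro r r' hrr'
      exact measure_mono fun ω (h : r' ≤ C ω) => le_trans hrr' h
    exact this.measurable
  have hWle : ∀ s ∈ Set.Icc 0 t, W s ≤ W t := by
    intro s hs
    refine ENNReal.ofReal_le_ofReal ?_
    have h1 : (0:ℝ) < 1 - (P {ω' | C ω' < t}).toReal := by
      have := hGlt t ⟨ht, le_refl t⟩
      linarith
    have h2 : 1 - (P {ω' | C ω' < t}).toReal ≤ 1 - (P {ω' | C ω' < s}).toReal := by
      have := hgmono hs.2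
      linarith
    exact inv_anti₀ h1 h2
  -- measurability of kernel-type integrals w.r.t. m
  have hrestrictMeas : Measurable[m] fun ω => (ν ω).restrict (Set.Icc 0 t) := by
    refine @Measure.measurable_of_measurable_coe ℝ Ω _ m _ (fun S hS => ?_)
    have : (fun ω => (ν ω).restrict (Set.Icc 0 t) S) = fun ω => ν ω (S ∩ Set.Icc 0 t) := by
      funext ω; rw [Measure.restrict_apply hS]
    rw [this]
    exact hνm _ (hS.inter measurableSet_Icc)
  have hlinm : ∀ {f : ℝ → ℝ≥0∞}, Measurable f →
      Measurable[m] (fun ω => ∫⁻ s, f s ∂((ν ω).restrict (Set.Icc 0 t))) := by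
    intro f hf
    exact (Measure.measurable_lintegral hf).comp hrestrictMeas
  have hlin0 : ∀ {f : ℝ → ℝ≥0∞}, Measurable f →
      Measurable (fun ω => ∫⁻ s, f s ∂((ν ω).restrict (Set.Icc 0 t))) :=
    fun hf => (hlinm hf).mono hm le_rfl
  have hfin : ∀ᵐ ω ∂P, ν ω (Set.Icc 0 t) < ⊤ :=
    ae_lt_top (hν _ measurableSet_Icc) hNint.ne
  haveI hsf : SigmaFinite (P.trim hm) := by
    have : IsFiniteMeasure (P.trim hm) := isFiniteMeasure_trim hm
    infer_instance
  haveI hsfZ : SigmaFinite (P.trim hmZ) := by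
    have : IsFiniteMeasure (P.trim hmZ) := isFiniteMeasure_trim hmZ
    infer_instance
  -- Step A : measure identity on m-measurable sets
  have hA : ∀ l : ℝ, l < t → ∀ B : Set Ω, MeasurableSet[m] B →
      P (B ∩ {ω | l < C ω}) = P {ω | l < C ω} * P B := by
    intro l hl B hBm
    rcases lt_or_ge l 0 with hl0 | hl0
    · have huniv : {ω | l < C ω} = Set.univ :=
        Set.eq_univ_of_forall fun ω => lt_of_lt_of_le hl0 (hCpos ω)
      simp [huniv]
    · -- approximating sequence from above
      set sj : ℕ → ℝ := fun j => l + (t - l)/(j+1) with hsjdef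
      have hlt : ∀ j, l < sj j := by
        intro j
        have h1 : (0:ℝ) < (j:ℝ)+1 := by positivity
        have : 0 < (t - l)/(j+1) := div_pos (sub_pos.mpr hl) h1
        simp only [hsjdef]
        linarith
      have hle : ∀ j, sj j ≤ t := by
        intro j
        have h1 : (1:ℝ) ≤ (j:ℝ)+1 := by
          have := Nat.cast_nonneg (α := ℝ) j
          linarith
        have : (t - l)/(j+1) ≤ t - l := div_le_self (sub_pos.mpr hl).le h1
        simp only [hsjdef]
        linarith
      have h0 : ∀ j, 0 ≤ sj j := fun j => hl0.trans (hlt j).le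
      have hanti : Antitone sj := by
        intro j j' hjj'
        have h1 : ((j:ℝ)+1) ≤ ((j':ℝ)+1) := by
          have : (j:ℝ) ≤ (j':ℝ) := by exact_mod_cast hjj'
          linarith
        simp only [hsjdef]
        have h2 : (t - l)/((j':ℝ)+1) ≤ (t - l)/((j:ℝ)+1) := by
          apply div_le_div_of_nonneg_left (sub_pos.mpr hl).le (by positivity) h1
        linarith
      have htend : Tendsto sj atTop (𝓝 l) := by
        have h1 : Tendsto (fun j : ℕ => (t - l) * (1/((j:ℝ)+1))) atTop (𝓝 ((t-l) * 0)) :=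
          tendsto_one_div_add_atTop_nhds_zero_nat.const_mul (t-l)
        have h2 := tendsto_const_nhds (x := l) (f := atTop (α := ℕ)) |>.add h1
        simp only [mul_one_div] at h2
        simpa using h2
      -- the per-j identity coming from the censoring condition
      have key : ∀ j, (P (B ∩ {ω | sj j ≤ C ω})).toReal
          = (1 - (P {ω | C ω < sj j}).toReal) * (P B).toReal := by
        intro j
        have hcj := hcens (sj j) ⟨h0 j, hle j⟩
        have hind : Integrable (Set.indicator {ω | sj j ≤ C ω} fun _ => (1:ℝ)) P :=
          (integrable_const (1:ℝ)).indicator (hCleMeas _)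
        have e1 : ∫ ω in B, Set.indicator {ω | sj j ≤ C ω} (fun _ => (1:ℝ)) ω ∂P
            = (P (B ∩ {ω | sj j ≤ C ω})).toReal := by
          rw [setIntegral_indicator (hCleMeas _), setIntegral_const, smul_eq_mul, mul_one, Measure.real]
        have e2 : ∫ ω in B, Set.indicator {ω | sj j ≤ C ω} (fun _ => (1:ℝ)) ω ∂P
            = (1 - (P {ω | C ω < sj j}).toReal) * (P B).toReal := by
          rw [← setIntegral_condExp hm hind hBm, integral_congr_ae (ae_restrict_of_ae hcj),
            setIntegral_const, smul_eq_mul, mul_comm, Measure.real]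
        rw [← e1, e2]
      -- limits
      have hlim1 : Tendsto (fun j => (P (B ∩ {ω | sj j ≤ C ω})).toReal) atTop
          (𝓝 ((P (B ∩ {ω | l < C ω})).toReal)) := by
        have hmono : Monotone fun j => B ∩ {ω | sj j ≤ C ω} := by
          intro j j' hjj'
          exact Set.inter_subset_inter_right _
            (fun ω (h : sj j ≤ C ω) => le_trans (hanti hjj') h)
        have hUnion : (⋃ j, (B ∩ {ω | sj j ≤ C ω})) = B ∩ {ω | l < C ω} := by
          rw [← Set.inter_iUnion]
          congr 1
          ext ω
          simp only [Set.mem_iUnion, Set.mem_setOf_eq]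
          constructor
          · rintro ⟨j, hj⟩
            exact lt_of_lt_of_le (hlt j) hj
          · intro h
            obtain ⟨j, hj⟩ := (htend.eventually_lt_const h).exists
            exact ⟨j, hj.le⟩
        have h1 := tendsto_measure_iUnion_atTop (μ := P) hmono
        rw [hUnion] at h1
        exact (ENNReal.tendsto_toReal (measure_ne_top P _)).comp h1
      have hlim2 : Tendsto (fun j => (1 - (P {ω | C ω < sj j}).toReal) * (P B).toReal) atTop
          (𝓝 ((1 - (P {ω | C ω ≤ l}).toReal) * (P B).toReal)) := by
        have hantiS : Antitone fun j => {ω | C ω < sj j} := by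
          intro j j' hjj'
          exact fun ω (h : C ω < sj j') => lt_of_lt_of_le h (hanti hjj')
        have hInter : (⋂ j, {ω | C ω < sj j}) = {ω | C ω ≤ l} := by
          ext ω
          simp only [Set.mem_iInter, Set.mem_setOf_eq]
          constructor
          · intro h
            exact ge_of_tendsto htend (Filter.Eventually.of_forall fun j => (h j).le)
          · intro h j
            exact lt_of_le_of_lt h (hlt j)
        have h1 := tendsto_measure_iInter_atTop (μ := P)
          (fun j => (hCltMeas _).nullMeasurableSet) hantiS ⟨0, measure_ne_top P _⟩
        rw [hInter] at h1
        have h2 := (ENNReal.tendsto_toReal (measure_ne_top P _)).comp h1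
        exact ((tendsto_const_nhds (x := (1:ℝ))).sub h2).mul_const _
      have hreal : (P (B ∩ {ω | l < C ω})).toReal
          = (1 - (P {ω | C ω ≤ l}).toReal) * (P B).toReal :=
        tendsto_nhds_unique ((tendsto_congr key).mp hlim1) hlim2
      -- convert back to ℝ≥0∞
      have hcompl : {ω | l < C ω} = {ω | C ω ≤ l}ᶜ := by
        ext ω; simp [not_le]
      have hPlt : (P {ω | l < C ω}).toReal = 1 - (P {ω | C ω ≤ l}).toReal := by
        rw [hcompl, prob_compl_eq_one_sub (hCleLMeas l),
          ENNReal.toReal_sub_of_le prob_le_one ENNReal.one_ne_top, ENNReal.toReal_one]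
      refine (ENNReal.toReal_eq_toReal_iff' (measure_ne_top _ _)
        (ENNReal.mul_ne_top (measure_ne_top _ _) (measure_ne_top _ _))).mp ?_
      rw [ENNReal.toReal_mul, hPlt, hreal]
  -- Step B : lintegral version
  have hB : ∀ l : ℝ, l < t → ∀ ψ : Ω → ℝ≥0∞, Measurable[m] ψ →
      ∫⁻ ω in {ω | l < C ω}, ψ ω ∂P = P {ω | l < C ω} * ∫⁻ ω, ψ ω ∂P := by
    intro l hl ψ hψ
    have hagree : ∀ B : Set Ω, MeasurableSet[m] B →
        (P.restrict {ω | l < C ω}) B = ((P {ω | l < C ω}) • P) B := by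
      intro B hBm
      rw [Measure.restrict_apply' (hCgtMeas l), Measure.smul_apply, smul_eq_mul, hA l hl B hBm]
    have := RescaledAux.lintegral_eq_of_agree hm _ _ hagree hψ
    rwa [lintegral_smul_measure] at this
  -- objects for the approximation argument
  set J : ℕ → ℤ → Ω → ℝ≥0∞ := fun n k ω =>
    ∫⁻ s in Set.Ioc ((k:ℝ)/(2:ℝ)^n) (((k:ℝ)+1)/(2:ℝ)^n), W s ∂((ν ω).restrict (Set.Icc 0 t))
    with hJdef
  set Fn : ℕ → Ω → ℝ≥0∞ := fun n ω =>
    ∫⁻ s, W s * (if RescaledAux.gl n s < C ω then 1 else 0) ∂((ν ω).restrict (Set.Icc 0 t))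
    with hFndef
  set Finf : Ω → ℝ≥0∞ := fun ω =>
    ∫⁻ s, W s * (if s ≤ C ω then 1 else 0) ∂((ν ω).restrict (Set.Icc 0 t)) with hFinfdef
  set Gn : ℕ → Ω → ℝ≥0∞ := fun n ω =>
    ∫⁻ s, W s * Q (RescaledAux.gl n s) ∂((ν ω).restrict (Set.Icc 0 t)) with hGndef
  set Ginf : Ω → ℝ≥0∞ := fun ω =>
    ∫⁻ s, W s * Qle s ∂((ν ω).restrict (Set.Icc 0 t)) with hGinfdef
  have hJm : ∀ n k, Measurable[m] (J n k) := by
    intro n k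
    have : J n k = fun ω => ∫⁻ s,
        (Set.Ioc ((k:ℝ)/(2:ℝ)^n) (((k:ℝ)+1)/(2:ℝ)^n)).indicator W s
          ∂((ν ω).restrict (Set.Icc 0 t)) := by
      funext ω
      rw [hJdef]
      exact (lintegral_indicator measurableSet_Ioc W).symm
    rw [this]
    exact hlinm (hWmeas.indicator measurableSet_Ioc)
  have hJ0 : ∀ n k, Measurable (J n k) := fun n k => (hJm n k).mono hm le_rfl
  have hdecompF : ∀ (n : ℕ) (ω : Ω), Fn n ω
      = ∑' k : ℤ, (if (k:ℝ)/(2:ℝ)^n < C ω then 1 else 0) * J n k ω := by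
    intro n ω
    refine RescaledAux.decomp_lemma _ n W _ _ hWmeas ?_ ?_
    · exact Measurable.ite (measurableSet_lt (RescaledAux.gl_measurable n) measurable_const)
        measurable_const measurable_const
    · intro k s hs
      rw [RescaledAux.gl_eq_on_piece hs]
  have hdecompG : ∀ (n : ℕ) (ω : Ω), Gn n ω
      = ∑' k : ℤ, Q ((k:ℝ)/(2:ℝ)^n) * J n k ω := by
    intro n ω
    refine RescaledAux.decomp_lemma _ n W _ _ hWmeas
      (hQmeas.comp (RescaledAux.gl_measurable n)) ?_
    intro k s hs
    rw [RescaledAux.gl_eq_on_piece hs]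
  have hFnmeas : ∀ n, Measurable (Fn n) := by
    intro n
    have : Fn n = fun ω => ∑' k : ℤ, (if (k:ℝ)/(2:ℝ)^n < C ω then 1 else 0) * J n k ω :=
      funext fun ω => hdecompF n ω
    rw [this]
    exact Measurable.ennreal_tsum fun k =>
      (Measurable.ite (hCgtMeas _) measurable_const measurable_const).mul (hJ0 n k)
  have hGnmeas : ∀ n, Measurable (Gn n) :=
    fun n => hlin0 (hWmeas.mul (hQmeas.comp (RescaledAux.gl_measurable n)))
  -- bounds
  have hWne : ∀ s, W s ≠ ⊤ := fun s => by rw [hWdef]; exact ENNReal.ofReal_ne_top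
  have hWt_ne_top : W t ≠ ⊤ := hWne t
  have hbound_int : ∫⁻ ω, W t * ν ω (Set.Icc 0 t) ∂P < ⊤ := by
    rw [lintegral_const_mul _ (hν _ measurableSet_Icc)]
    exact ENNReal.mul_lt_top hWt_ne_top.lt_top hNint
  have hboundle : ∀ (v : ℝ → ℝ≥0∞), (∀ s, v s ≤ 1) → ∀ ω,
      (∫⁻ s, W s * v s ∂((ν ω).restrict (Set.Icc 0 t))) ≤ W t * ν ω (Set.Icc 0 t) := by
    intro v hv ω
    have h1 : (∫⁻ s, W s * v s ∂((ν ω).restrict (Set.Icc 0 t)))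
        ≤ ∫⁻ _, W t ∂((ν ω).restrict (Set.Icc 0 t)) := by
      refine lintegral_mono_ae ((ae_restrict_mem measurableSet_Icc).mono fun s hs => ?_)
      calc W s * v s ≤ W s * 1 := mul_le_mul_right (hv s) _
        _ = W s := mul_one _
        _ ≤ W t := hWle s hs
    simpa [lintegral_const, Measure.restrict_apply_univ] using h1
  have hFn_le : ∀ n ω, Fn n ω ≤ W t * ν ω (Set.Icc 0 t) := by
    intro n ω
    exact hboundle _ (fun s => by split <;> simp) ω
  have hFinf_le : ∀ ω, Finf ω ≤ W t * ν ω (Set.Icc 0 t) := by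
    intro ω
    exact hboundle _ (fun s => by split <;> simp) ω
  have hGinf_le : ∀ ω, Ginf ω ≤ W t * ν ω (Set.Icc 0 t) :=
    fun ω => hboundle _ (fun s => prob_le_one) ω
  -- pointwise limits of the inner integrals
  have hFtend : ∀ᵐ ω ∂P, Tendsto (fun n => Fn n ω) atTop (𝓝 (Finf ω)) := by
    refine hfin.mono fun ω hω => ?_
    refine tendsto_lintegral_of_dominated_convergence (fun _ => W t) ?_ ?_ ?_ ?_
    · intro n
      exact hWmeas.mul (Measurable.ite
        (measurableSet_lt (RescaledAux.gl_measurable n) measurable_const)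
        measurable_const measurable_const)
    · intro n
      refine (ae_restrict_mem measurableSet_Icc).mono fun s hs => ?_
      calc W s * (if RescaledAux.gl n s < C ω then 1 else 0) ≤ W s * 1 :=
            mul_le_mul_right (by split <;> simp) _
        _ = W s := mul_one _
        _ ≤ W t := hWle s hs
    · rw [lintegral_const, Measure.restrict_apply_univ]
      exact (ENNReal.mul_lt_top hWt_ne_top.lt_top hω).ne
    · refine Filter.Eventually.of_forall fun s => ?_
      by_cases hsC : s ≤ C ω
      · have h1 : ∀ n, (if RescaledAux.gl n s < C ω then (1:ℝ≥0∞) else 0) = 1 :=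
          fun n => if_pos (lt_of_lt_of_le (RescaledAux.gl_lt n s) hsC)
        simp only [h1, if_pos hsC]
        exact tendsto_const_nhds
      · have h2 : ∀ᶠ n in atTop, W s * (if RescaledAux.gl n s < C ω then (1:ℝ≥0∞) else 0)
            = 0 := by
          have h3 : C ω < s := lt_of_not_ge hsC
          filter_upwards [(RescaledAux.gl_tendsto s).eventually_const_lt h3] with n hn
          rw [if_neg (not_lt.mpr hn.le), mul_zero]
        rw [show W s * (if s ≤ C ω then (1:ℝ≥0∞) else 0) = 0 by rw [if_neg hsC, mul_zero]]
        exact Tendsto.congr' (h2.mono fun n hn => hn.symm) tendsto_const_nhds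
  have hQtend : ∀ s : ℝ, Tendsto (fun n => Q (RescaledAux.gl n s)) atTop (𝓝 (Qle s)) := by
    intro s
    have hantiS : Antitone fun n => {ω | RescaledAux.gl n s < C ω} := by
      intro n n' hnn'
      exact fun ω (h : RescaledAux.gl n' s < C ω) =>
        lt_of_le_of_lt (RescaledAux.gl_mono s hnn') h
    have hInter : (⋂ n, {ω | RescaledAux.gl n s < C ω}) = {ω | s ≤ C ω} := by
      ext ω
      simp only [Set.mem_iInter, Set.mem_setOf_eq]
      constructor
      · intro h
        exact le_of_tendsto (RescaledAux.gl_tendsto s)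
          (Filter.Eventually.of_forall fun n => (h n).le)
      · intro h n
        exact lt_of_lt_of_le (RescaledAux.gl_lt n s) h
    have h1 := tendsto_measure_iInter_atTop (μ := P)
      (fun n => (hCgtMeas _).nullMeasurableSet) hantiS ⟨0, measure_ne_top P _⟩
    rw [hInter] at h1
    exact h1
  have hGtend : ∀ᵐ ω ∂P, Tendsto (fun n => Gn n ω) atTop (𝓝 (Ginf ω)) := by
    refine hfin.mono fun ω hω => ?_
    refine tendsto_lintegral_of_dominated_convergence (fun _ => W t) ?_ ?_ ?_ ?_
    · intro n
      exact hWmeas.mul (hQmeas.comp (RescaledAux.gl_measurable n))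
    · intro n
      refine (ae_restrict_mem measurableSet_Icc).mono fun s hs => ?_
      calc W s * Q (RescaledAux.gl n s) ≤ W s * 1 := mul_le_mul_right prob_le_one _
        _ = W s := mul_one _
        _ ≤ W t := hWle s hs
    · rw [lintegral_const, Measure.restrict_apply_univ]
      exact (ENNReal.mul_lt_top hWt_ne_top.lt_top hω).ne
    · refine Filter.Eventually.of_forall fun s => ?_
      exact ENNReal.Tendsto.const_mul (hQtend s) (Or.inr (hWne s))
  -- the key identity
  have hKey2 : ∀ A : Set Ω, MeasurableSet[m] A →
      ∫⁻ ω in A, Finf ω ∂P = ∫⁻ ω in A, ν ω (Set.Icc 0 t) ∂P := by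
    intro A hAm
    have hA0 : MeasurableSet A := hm _ hAm
    have hterm : ∀ (n : ℕ) (k : ℤ),
        ∫⁻ ω, A.indicator (fun ω' => (if (k:ℝ)/(2:ℝ)^n < C ω' then 1 else 0) * J n k ω') ω ∂P
          = Q ((k:ℝ)/(2:ℝ)^n) * ∫⁻ ω, A.indicator (J n k) ω ∂P := by
      intro n k
      by_cases hk : (k:ℝ)/(2:ℝ)^n < t
      · have hrepr : A.indicator (fun ω' => (if (k:ℝ)/(2:ℝ)^n < C ω' then 1 else 0) * J n k ω')
            = {ω | (k:ℝ)/(2:ℝ)^n < C ω}.indicator (A.indicator (J n k)) := by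
          funext ω
          by_cases hωA : ω ∈ A <;> by_cases hωC : (k:ℝ)/(2:ℝ)^n < C ω <;>
            simp [Set.indicator, hωA, hωC]
        rw [hrepr, lintegral_indicator (hCgtMeas _)]
        exact hB _ hk _ ((hJm n k).indicator hAm)
      · have hJzero : ∀ ω, J n k ω = 0 := by
          intro ω
          simp only [hJdef]
          rw [Measure.restrict_restrict measurableSet_Ioc]
          have hempty : Set.Ioc ((k:ℝ)/(2:ℝ)^n) (((k:ℝ)+1)/(2:ℝ)^n) ∩ Set.Icc 0 t = ∅ := by
            ext s
            simp only [Set.mem_inter_iff, Set.mem_Ioc, Set.mem_Icc,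
              Set.mem_empty_iff_false, iff_false, not_and, and_imp]
            intro h1 _ _ h4
            exact absurd h1 (not_lt.mpr (h4.trans (not_lt.mp hk)))
          rw [hempty, Measure.restrict_empty, lintegral_zero_measure]
        have hz1 : (A.indicator fun ω' => (if (k:ℝ)/(2:ℝ)^n < C ω' then 1 else 0) * J n k ω')
            = fun _ => 0 := by
          funext ω
          by_cases hωA : ω ∈ A <;> simp [Set.indicator, hωA, hJzero ω]
        have hz2 : A.indicator (J n k) = fun _ => 0 := by
          funext ω
          by_cases hωA : ω ∈ A <;> simp [Set.indicator, hωA, hJzero ω]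
        rw [hz1, hz2]
        simp
    have hHn : ∀ n, ∫⁻ ω, A.indicator (Fn n) ω ∂P = ∫⁻ ω, A.indicator (Gn n) ω ∂P := by
      intro n
      have hmeasL : ∀ k : ℤ, Measurable
          (A.indicator fun ω' => (if (k:ℝ)/(2:ℝ)^n < C ω' then 1 else 0) * J n k ω') :=
        fun k => ((Measurable.ite (hCgtMeas _) measurable_const measurable_const).mul
          (hJ0 n k)).indicator hA0
      have hmeasR : ∀ k : ℤ, Measurable
          (A.indicator fun ω' => Q ((k:ℝ)/(2:ℝ)^n) * J n k ω') :=
        fun k => (measurable_const.mul (hJ0 n k)).indicator hA0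
      calc ∫⁻ ω, A.indicator (Fn n) ω ∂P
          = ∫⁻ ω, ∑' k : ℤ, A.indicator
              (fun ω' => (if (k:ℝ)/(2:ℝ)^n < C ω' then 1 else 0) * J n k ω') ω ∂P := by
            refine lintegral_congr fun ω => ?_
            by_cases hωA : ω ∈ A
            · simp only [Set.indicator_of_mem hωA]
              exact hdecompF n ω
            · simp [Set.indicator_of_notMem hωA]
        _ = ∑' k : ℤ, ∫⁻ ω, A.indicator
              (fun ω' => (if (k:ℝ)/(2:ℝ)^n < C ω' then 1 else 0) * J n k ω') ω ∂P :=
            lintegral_tsum fun k => (hmeasL k).aemeasurable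
        _ = ∑' k : ℤ, Q ((k:ℝ)/(2:ℝ)^n) * ∫⁻ ω, A.indicator (J n k) ω ∂P :=
            tsum_congr fun k => hterm n k
        _ = ∑' k : ℤ, ∫⁻ ω, A.indicator (fun ω' => Q ((k:ℝ)/(2:ℝ)^n) * J n k ω') ω ∂P := by
            refine tsum_congr fun k => ?_
            rw [← lintegral_const_mul _ ((hJ0 n k).indicator hA0)]
            refine lintegral_congr fun ω => ?_
            by_cases hωA : ω ∈ A <;> simp [Set.indicator, hωA]
        _ = ∫⁻ ω, ∑' k : ℤ, A.indicator (fun ω' => Q ((k:ℝ)/(2:ℝ)^n) * J n k ω') ω ∂P :=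
            (lintegral_tsum fun k => (hmeasR k).aemeasurable).symm
        _ = ∫⁻ ω, A.indicator (Gn n) ω ∂P := by
            refine lintegral_congr fun ω => ?_
            by_cases hωA : ω ∈ A
            · simp only [Set.indicator_of_mem hωA]
              exact (hdecompG n ω).symm
            · simp [Set.indicator_of_notMem hωA]
    have houtF : Tendsto (fun n => ∫⁻ ω, A.indicator (Fn n) ω ∂P) atTop
        (𝓝 (∫⁻ ω, A.indicator Finf ω ∂P)) := by
      refine tendsto_lintegral_of_dominated_convergence (fun ω => W t * ν ω (Set.Icc 0 t))
        (fun n => (hFnmeas n).indicator hA0)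
        (fun n => Filter.Eventually.of_forall fun ω =>
          le_trans (Set.indicator_le_self _ _ ω) (hFn_le n ω))
        hbound_int.ne ?_
      refine hFtend.mono fun ω hω => ?_
      by_cases hωA : ω ∈ A
      · simpa [Set.indicator_of_mem hωA] using hω
      · simp [Set.indicator_of_notMem hωA]
    have houtG : Tendsto (fun n => ∫⁻ ω, A.indicator (Gn n) ω ∂P) atTop
        (𝓝 (∫⁻ ω, A.indicator Ginf ω ∂P)) := by
      refine tendsto_lintegral_of_dominated_convergence (fun ω => W t * ν ω (Set.Icc 0 t))
        (fun n => (hGnmeas n).indicator hA0)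
        (fun n => Filter.Eventually.of_forall fun ω =>
          le_trans (Set.indicator_le_self _ _ ω)
            (hboundle _ (fun s => prob_le_one) ω))
        hbound_int.ne ?_
      refine hGtend.mono fun ω hω => ?_
      by_cases hωA : ω ∈ A
      · simpa [Set.indicator_of_mem hωA] using hω
      · simp [Set.indicator_of_notMem hωA]
    have hFG : ∫⁻ ω, A.indicator Finf ω ∂P = ∫⁻ ω, A.indicator Ginf ω ∂P :=
      tendsto_nhds_unique ((tendsto_congr hHn).mp houtF) houtG
    have hGinf_eq : ∀ ω, Ginf ω = ν ω (Set.Icc 0 t) := by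
      intro ω
      have hrfl : Ginf ω = ∫⁻ s in Set.Icc 0 t, W s * Qle s ∂(ν ω) := rfl
      rw [hrfl]
      have hpoint : ∀ s ∈ Set.Icc 0 t, W s * Qle s = 1 := by
        intro s hs
        have ha : (P {ω' | C ω' < s}) ≠ ⊤ := measure_ne_top _ _
        have halt : (P {ω' | C ω' < s}).toReal < 1 := hGlt s hs
        have hpos : (0:ℝ) < 1 - (P {ω' | C ω' < s}).toReal := by linarith
        have hQle_eq : Qle s = ENNReal.ofReal (1 - (P {ω' | C ω' < s}).toReal) := by
          simp only [hQledef]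
          have hcompl : {ω | s ≤ C ω} = {ω | C ω < s}ᶜ := by
            ext ω; simp [not_lt]
          rw [hcompl, prob_compl_eq_one_sub (hCltMeas s),
            ENNReal.ofReal_sub _ ENNReal.toReal_nonneg, ENNReal.ofReal_one,
            ENNReal.ofReal_toReal ha]
        simp only [hWdef, hQle_eq]
        rw [← ENNReal.ofReal_mul (inv_nonneg.mpr hpos.le),
          inv_mul_cancel₀ hpos.ne', ENNReal.ofReal_one]
      calc ∫⁻ s in Set.Icc 0 t, W s * Qle s ∂(ν ω)
          = ∫⁻ s in Set.Icc 0 t, 1 ∂(ν ω) :=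
            setLIntegral_congr_fun measurableSet_Icc
              (fun s hs => hpoint s hs)
        _ = ν ω (Set.Icc 0 t) := setLIntegral_one _
    rw [← lintegral_indicator hA0 Finf, ← lintegral_indicator hA0 (fun ω => ν ω (Set.Icc 0 t)),
      hFG]
    refine lintegral_congr fun ω => ?_
    by_cases hωA : ω ∈ A <;> simp [Set.indicator, hωA, hGinf_eq ω]
  -- Bochner integral translation
  have hFinfmeas : AEMeasurable Finf P :=
    aemeasurable_of_tendsto_metrizable_ae' (fun n => (hFnmeas n).aemeasurable) hFtend
  have hFinf_lt : ∀ᵐ ω ∂P, Finf ω < ⊤ :=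
    hfin.mono fun ω hω => lt_of_le_of_lt (hFinf_le ω)
      (ENNReal.mul_lt_top hWt_ne_top.lt_top hω)
  set fR : Ω → ℝ := fun ω => ∫ s in Set.Icc 0 t,
      (if s ≤ C ω then (1 - (P {ω' | C ω' < s}).toReal)⁻¹ else 0) ∂(ν ω) with hfRdef
  set gR : Ω → ℝ := fun ω => (ν ω (Set.Icc 0 t)).toReal with hgRdef
  have hfReq : fR = fun ω => (Finf ω).toReal := by
    funext ω
    rw [hfRdef]
    beta_reduce
    have hnonneg : 0 ≤ᵐ[(ν ω).restrict (Set.Icc 0 t)]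
        fun s => (if s ≤ C ω then (1 - (P {ω' | C ω' < s}).toReal)⁻¹ else 0) := by
      refine Filter.Eventually.of_forall fun s => ?_
      show (0:ℝ) ≤ if s ≤ C ω then (1 - (P {ω' | C ω' < s}).toReal)⁻¹ else 0
      by_cases hsC : s ≤ C ω
      · rw [if_pos hsC]
        have h1 := htoReal_le_one s
        have h2 : (0:ℝ) ≤ 1 - (P {ω' | C ω' < s}).toReal := by linarith
        exact inv_nonneg.mpr h2
      · rw [if_neg hsC]
    have hsm : AEStronglyMeasurable
        (fun s => (if s ≤ C ω then (1 - (P {ω' | C ω' < s}).toReal)⁻¹ else 0))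
        ((ν ω).restrict (Set.Icc 0 t)) := by
      have heq : (fun s => (if s ≤ C ω then (1 - (P {ω' | C ω' < s}).toReal)⁻¹ else 0))
          = (Set.Iic (C ω)).indicator (fun s => (1 - (P {ω' | C ω' < s}).toReal)⁻¹) := by
        funext s
        simp [Set.indicator, Set.mem_Iic]
      rw [heq]
      exact (hwmeas.indicator measurableSet_Iic).aestronglyMeasurable
    rw [integral_eq_lintegral_of_nonneg_ae hnonneg hsm]
    congr 1
    refine lintegral_congr fun s => ?_
    by_cases hsC : s ≤ C ω
    · rw [if_pos hsC, if_pos hsC, mul_one]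
    · rw [if_neg hsC, if_neg hsC, mul_zero, ENNReal.ofReal_zero]
  have hIntf : Integrable fR P := by
    rw [hfReq]
    refine integrable_toReal_of_lintegral_ne_top hFinfmeas ?_
    exact ((lintegral_mono fun ω => hFinf_le ω).trans_lt hbound_int).ne
  have hIntg : Integrable gR P :=
    integrable_toReal_of_lintegral_ne_top (hν _ measurableSet_Icc).aemeasurable hNint.ne
  have hsetEq : ∀ A : Set Ω, MeasurableSet[mZ] A →
      ∫ ω in A, fR ω ∂P = ∫ ω in A, gR ω ∂P := by
    intro A hAZ
    have hAm : MeasurableSet[m] A := hmZm _ hAZ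
    have h1 : ∫ ω in A, fR ω ∂P = (∫⁻ ω in A, Finf ω ∂P).toReal := by
      rw [hfReq]
      exact integral_toReal hFinfmeas.restrict (ae_restrict_of_ae hFinf_lt)
    have h2 : ∫ ω in A, gR ω ∂P = (∫⁻ ω in A, ν ω (Set.Icc 0 t) ∂P).toReal := by
      rw [hgRdef]
      exact integral_toReal (hν _ measurableSet_Icc).aemeasurable.restrict
        (ae_restrict_of_ae hfin)
    rw [h1, h2, hKey2 A hAm]
  constructor
  · have h := ae_eq_condExp_of_forall_setIntegral_eq (μ := P) hmZ hIntf
      (fun s _ _ => integrable_condExp.integrableOn)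
      (fun s hs _ => by
        rw [setIntegral_condExp hmZ hIntg hs]
        exact (hsetEq s hs).symm)
      (StronglyMeasurable.aestronglyMeasurable stronglyMeasurable_condExp)
    exact h.symm
  · have h := hsetEq Set.univ MeasurableSet.univ
    simpa [Measure.restrict_univ] using h

/-- Unbiasedness of the rescaled process: if `ν` is the random measure of
recurrent events (carried by `[0, D]`), `C` the censoring time with `G(s⁻) = P(C < s)`, and
the censoring condition `E[1{C ≥ s} | σ(ν, D, Z)] = 1 − G(s⁻)` holds for all `s ∈ [0, t]`,
then the rescaled process `Y(t) = ∫_{[0,t]} 1{s ≤ C} (1 − G(s⁻))⁻¹ ν(ds)` satisfies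
`E[Y(t) | σ(Z)] = E[N*(t) | σ(Z)]` a.s., and in particular `E[Y(t)] = E[N*(t)]`. -/
theorem rescaled_process_unbiased
    {Ω : Type*} [MeasurableSpace Ω] (P : Measure Ω) [IsProbabilityMeasure P]
    {d : ℕ} (Z : Ω → (Fin d → ℝ)) (hZ : Measurable Z)
    (ν : Ω → Measure ℝ)
    (hν : ∀ B : Set ℝ, MeasurableSet B → Measurable (fun ω => ν ω B))
    (D : Ω → ℝ) (hD : Measurable D) (hDpos : ∀ ω, 0 ≤ D ω)
    (C : Ω → ℝ) (hC : Measurable C) (hCpos : ∀ ω, 0 ≤ C ω)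
    -- `ν_ω` is supported on `[0, D(ω)]` for `P`-a.e. `ω`
    (hsupp : ∀ᵐ ω ∂P, ν ω (Set.Icc 0 (D ω))ᶜ = 0)
    (t : ℝ) (ht : 0 ≤ t)
    -- `G(s⁻) < 1` for every `s ∈ [0, t]`
    (hGlt : ∀ s ∈ Set.Icc 0 t, (P {ω | C ω < s}).toReal < 1)
    -- `E[ν([0, t])] < ∞`
    (hNint : ∫⁻ ω, ν ω (Set.Icc 0 t) ∂P < ⊤)
    -- censoring condition: for every `s ∈ [0, t]`,
    -- `E[1{C ≥ s} | σ(ν, D, Z)] = 1 − G(s⁻)` a.s.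
    (hcens : ∀ s ∈ Set.Icc 0 t,
      P[Set.indicator {ω | s ≤ C ω} (fun _ => (1 : ℝ)) |
          (MeasurableSpace.comap D inferInstance ⊔ MeasurableSpace.comap Z inferInstance) ⊔
            ⨆ (B : Set ℝ) (_ : MeasurableSet B),
              MeasurableSpace.comap (fun ω => ν ω B) inferInstance]
        =ᵐ[P] fun _ => 1 - (P {ω | C ω < s}).toReal) :
    (P[fun ω => ∫ s in Set.Icc 0 t,
          (if s ≤ C ω then (1 - (P {ω' | C ω' < s}).toReal)⁻¹ else 0) ∂(ν ω) |
        MeasurableSpace.comap Z inferInstance]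
      =ᵐ[P]
      P[fun ω => (ν ω (Set.Icc 0 t)).toReal | MeasurableSpace.comap Z inferInstance])
    ∧ (∫ ω, (∫ s in Set.Icc 0 t,
          (if s ≤ C ω then (1 - (P {ω' | C ω' < s}).toReal)⁻¹ else 0) ∂(ν ω)) ∂P
        = ∫ ω, (ν ω (Set.Icc 0 t)).toReal ∂P) := by
  refine rescaled_aux
    ((MeasurableSpace.comap D inferInstance ⊔ MeasurableSpace.comap Z inferInstance) ⊔
      ⨆ (B : Set ℝ) (_ : MeasurableSet B),
        MeasurableSpace.comap (fun ω => ν ω B) inferInstance)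
    (MeasurableSpace.comap Z inferInstance) P ?_ ?_ ?_ ν hν ?_ C hC hCpos t ht hGlt hNint hcens
  · exact sup_le (sup_le hD.comap_le hZ.comap_le) (iSup₂_le fun B hB => (hν B hB).comap_le)
  · exact hZ.comap_le
  · exact le_trans le_sup_right le_sup_left
  · intro B hB
    exact Measurable.of_comap_le (le_trans
      (le_iSup₂ (f := fun (B : Set ℝ) (_ : MeasurableSet B) =>
        MeasurableSpace.comap (fun ω => ν ω B) inferInstance) B hB) le_sup_right)
end

section
/- Let (Ω, 𝓐, P) be a probability space. Let ν : Ω → Measure([0, ∞)) be a random measure (meaning ω ↦ ν_ω(B) is measurable for every Borel set B), encoding the recurrent event process via N*(t) = ν([0, t]). Let D : Ω → [0, ∞) be a random terminal time such that ν_ω is supported on [0, D(ω)] for P-almost every ω, let C : Ω → [0, ∞) be the censoring time with distribution function G(t) = P(C ≤ t) and left limit G(s⁻) = P(C < s), and let Z : Ω → ℝ^d be a covariate vector. Let σ(ν, D, Z) be the σ-algebra generated by D, Z and all evaluations ω ↦ ν_ω(B). Fix t ≥ 0 such that G(s⁻) < 1 for every s ∈ [0, t], assume E[ν([0, t])] <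 ∞, and assume: for every s ∈ [0, t], E[1{C ≥ s} | σ(ν, D, Z)] = 1 − G(s⁻) P-almost surely. Define Y(t) = ∫_{[0, t]} 1{s ≤ C} (1 − G(s⁻))^{-1} ν(ds). Then for every θ ∈ ℝ^d, E[Y(t) | σ(θ'Z)] = E[ν([0, t]) | σ(θ'Z)] P-almost surely, where σ(θ'Z) is the σ-algebra generated by the real random variable θ'Z. -/
open MeasureTheory Matrix
open scoped ENNReal

lemma cens_lintegral {Ω : Type*} {m : MeasurableSpace Ω} [m0 : MeasurableSpace Ω]
    (P : Measure Ω) [IsProbabilityMeasure P] (hm : m ≤ m0)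
    {S : Set Ω} (hS : MeasurableSet S) {c : ℝ} (hc : 0 ≤ c)
    (hcond : P[S.indicator (fun _ => (1 : ℝ)) | m] =ᵐ[P] fun _ => c)
    {g : Ω → ℝ≥0∞} (hg : Measurable[m] g) :
    ∫⁻ ω in S, g ω ∂P = ENNReal.ofReal c * ∫⁻ ω, g ω ∂P := by
  haveI : SigmaFinite (P.trim hm) := inferInstance
  have hint : Integrable (S.indicator (fun _ => (1 : ℝ))) P :=
    (integrable_const (1 : ℝ)).indicator hS
  have key : ∀ E : Set Ω, MeasurableSet[m] E → P (E ∩ S) = ENNReal.ofReal c * P E := by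
    intro E hE
    have h1 : ∫ ω in E, S.indicator (fun _ => (1 : ℝ)) ω ∂P = c * (P E).toReal := by
      rw [← setIntegral_condExp hm hint hE]
      rw [integral_congr_ae (ae_restrict_of_ae hcond)]
      simp [mul_comm, Measure.real]
    have h2 : ∫ ω in E, S.indicator (fun _ => (1 : ℝ)) ω ∂P = (P (E ∩ S)).toReal := by
      rw [integral_indicator_const (1 : ℝ) hS, measureReal_restrict_apply hS, Set.inter_comm]
      simp [Measure.real]
    have h3 : (P (E ∩ S)).toReal = c * (P E).toReal := h2 ▸ h1
    have := congrArg ENNReal.ofReal h3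
    rwa [ENNReal.ofReal_toReal (measure_ne_top P _), ENNReal.ofReal_mul hc,
      ENNReal.ofReal_toReal (measure_ne_top P _)] at this
  have htrim : (P.restrict S).trim hm = (ENNReal.ofReal c • P).trim hm := by
    refine @Measure.ext Ω m _ _ fun E hE => ?_
    rw [trim_measurableSet_eq hm hE, trim_measurableSet_eq hm hE,
      Measure.restrict_apply' hS, Measure.smul_apply, smul_eq_mul]
    exact key E hE
  calc ∫⁻ ω in S, g ω ∂P = ∫⁻ ω, g ω ∂((P.restrict S).trim hm) := (lintegral_trim hm hg).symm
    _ = ∫⁻ ω, g ω ∂((ENNReal.ofReal c • P).trim hm) := by rw [htrim]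
    _ = ∫⁻ ω, g ω ∂(ENNReal.ofReal c • P) := lintegral_trim hm hg
    _ = ENNReal.ofReal c * ∫⁻ ω, g ω ∂P := lintegral_smul_measure _ _

lemma meas_lint {Ω : Type*} {G : MeasurableSpace Ω} {ν : Ω → Measure ℝ}
    (hν : ∀ B : Set ℝ, MeasurableSet B → Measurable[G] fun ω => ν ω B)
    {f : ℝ → ℝ≥0∞} (hf : Measurable f) :
    Measurable[G] fun ω => ∫⁻ s, f s ∂ν ω :=
  (Measure.measurable_lintegral hf).comp
    (@Measure.measurable_of_measurable_coe ℝ Ω _ G ν hν)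

lemma key_identity {Ω : Type*} {G : MeasurableSpace Ω} [m0 : MeasurableSpace Ω]
    (hG : G ≤ m0) (P : Measure Ω) [IsProbabilityMeasure P]
    {ν : Ω → Measure ℝ} (hν : ∀ B : Set ℝ, MeasurableSet B → Measurable (fun ω => ν ω B))
    (hνG : ∀ B : Set ℝ, MeasurableSet B → Measurable[G] fun ω => ν ω B)
    {C : Ω → ℝ} (hC : Measurable C) (hCpos : ∀ ω, 0 ≤ C ω)
    {t : ℝ} (ht : 0 ≤ t)
    (hGlt : ∀ s ∈ Set.Icc 0 t, (P {ω | C ω < s}).toReal < 1)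
    (hNint : ∫⁻ ω, ν ω (Set.Icc 0 t) ∂P < ⊤)
    (hcens' : ∀ s ∈ Set.Icc 0 t, ∀ g : Ω → ℝ≥0∞, Measurable[G] g →
      ∫⁻ ω in {ω | s ≤ C ω}, g ω ∂P
        = ENNReal.ofReal (1 - (P {ω | C ω < s}).toReal) * ∫⁻ ω, g ω ∂P) :
    AEMeasurable (fun ω => ∫⁻ s, (if s ≤ C ω
        then ENNReal.ofReal ((1 - (P {ω' | C ω' < s}).toReal)⁻¹) else 0)
        ∂((ν ω).restrict (Set.Icc 0 t))) P ∧
    ∀ A : Set Ω, MeasurableSet[G] A →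
      ∫⁻ ω in A, (∫⁻ s, (if s ≤ C ω
          then ENNReal.ofReal ((1 - (P {ω' | C ω' < s}).toReal)⁻¹) else 0)
          ∂((ν ω).restrict (Set.Icc 0 t))) ∂P
        = ∫⁻ ω in A, ν ω (Set.Icc 0 t) ∂P := by
  set Q : ℝ → ℝ≥0∞ := fun x => P {ω | C ω < x} with hQdef
  set Wf : ℝ → ℝ≥0∞ := fun s => ENNReal.ofReal ((1 - (P {ω | C ω < s}).toReal)⁻¹) with hWdef
  set μr : Ω → Measure ℝ := fun ω => (ν ω).restrict (Set.Icc 0 t) with hμrdef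
  set bl : ℝ → ℝ → ℝ≥0∞ := fun x y => if x ≤ y then 1 else 0 with hbldef
  set l : ℕ → ℝ → ℝ := fun n s => (⌊2 ^ n * s⌋₊ : ℝ) / 2 ^ n with hldef
  set YL : Ω → ℝ≥0∞ := fun ω => ∫⁻ s, bl s (C ω) * Wf s ∂μr ω with hYLdef
  set inner1 : ℕ → Ω → ℝ≥0∞ := fun n ω => ∫⁻ s, bl (l n s) (C ω) * Wf s ∂μr ω with hi1def
  set inner2 : ℕ → Ω → ℝ≥0∞ := fun n ω => ∫⁻ s, (1 - Q (l n s)) * Wf s ∂μr ω with hi2def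
  -- the integrand in the statement equals the `bl` form
  have hstmt : (fun ω => ∫⁻ s, (if s ≤ C ω
      then ENNReal.ofReal ((1 - (P {ω' | C ω' < s}).toReal)⁻¹) else 0)
      ∂((ν ω).restrict (Set.Icc 0 t))) = YL := by
    funext ω
    refine lintegral_congr fun s => ?_
    by_cases h : s ≤ C ω <;> simp [hbldef, hWdef, h]
  rw [hstmt]
  -- basic facts
  have hpow : ∀ n : ℕ, (0:ℝ) < 2 ^ n := fun n => by positivity
  have hQmono : Monotone Q := fun x y hxy =>
    measure_mono fun ω (hω : C ω < x) => lt_of_lt_of_le hω hxy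
  have hQmeas : Measurable Q := hQmono.measurable
  have hQne : ∀ x, Q x ≠ ∞ := fun x => measure_ne_top P _
  have hWmeas : Measurable Wf := by
    refine ENNReal.measurable_ofReal.comp ?_
    exact (measurable_const.sub (ENNReal.measurable_toReal.comp hQmeas)).inv
  have hWne : ∀ s, Wf s ≠ ∞ := fun s => ENNReal.ofReal_ne_top
  have hWle : ∀ s ∈ Set.Icc 0 t, Wf s ≤ Wf t := by
    intro s hs
    refine ENNReal.ofReal_le_ofReal ?_
    have h1 : 0 < 1 - (Q t).toReal := sub_pos.mpr (hGlt t ⟨ht, le_rfl⟩)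
    have h2 : (Q s).toReal ≤ (Q t).toReal :=
      ENNReal.toReal_mono (hQne t) (hQmono hs.2)
    exact inv_anti₀ h1 (by linarith)
  have hone : ∀ s ∈ Set.Icc 0 t, (1 - Q s) * Wf s = 1 := by
    intro s hs
    have hlt : (Q s).toReal < 1 := hGlt s hs
    have h1 : (1:ℝ≥0∞) - Q s = ENNReal.ofReal (1 - (Q s).toReal) := by
      rw [ENNReal.ofReal_sub 1 ENNReal.toReal_nonneg, ENNReal.ofReal_one,
        ENNReal.ofReal_toReal (hQne s)]
    rw [h1, hWdef, ← ENNReal.ofReal_mul (by linarith),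
      mul_inv_cancel₀ (by linarith : (1:ℝ) - (Q s).toReal ≠ 0), ENNReal.ofReal_one]
  -- bound
  have hIbound : ∀ (ω : Ω) (f : ℝ → ℝ≥0∞), (∀ s, f s ≤ Wf s) →
      ∫⁻ s, f s ∂μr ω ≤ Wf t * ν ω (Set.Icc 0 t) := by
    intro ω f hf
    calc ∫⁻ s, f s ∂μr ω ≤ ∫⁻ _, Wf t ∂μr ω := by
          refine lintegral_mono_ae (((ae_restrict_mem measurableSet_Icc).mono
            fun s hs => ?_))
          exact le_trans (hf s) (hWle s hs)
      _ = Wf t * ν ω (Set.Icc 0 t) := by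
          rw [lintegral_const, Measure.restrict_apply_univ]
  -- measurability of fixed-integrand integrals
  have hμlint : ∀ {f : ℝ → ℝ≥0∞}, Measurable f →
      Measurable[G] fun ω => ∫⁻ s, f s ∂μr ω := by
    intro f hf
    have heq : (fun ω => ∫⁻ s, f s ∂μr ω)
        = fun ω => ∫⁻ s, (Set.Icc 0 t).indicator f s ∂ν ω := by
      funext ω
      rw [lintegral_indicator measurableSet_Icc]
    rw [heq]
    exact meas_lint hνG (hf.indicator measurableSet_Icc)
  have hNae : ∀ᵐ ω ∂P, ν ω (Set.Icc 0 t) ≠ ∞ :=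
    (ae_lt_top (hν _ measurableSet_Icc) hNint.ne).mono fun ω h => h.ne
  -- facts about l
  have hl_nonneg : ∀ n s, 0 ≤ l n s := fun n s => by
    simp only [hldef]; positivity
  have hl_zero : ∀ n s, s < 0 → l n s = 0 := by
    intro n s hs
    simp only [hldef]
    rw [Nat.floor_of_nonpos (by nlinarith [hpow n])]
    simp
  have hl_le : ∀ n s, 0 ≤ s → l n s ≤ s := by
    intro n s hs
    simp only [hldef]
    rw [div_le_iff₀ (hpow n)]
    calc ((⌊2 ^ n * s⌋₊ : ℝ)) ≤ 2 ^ n * s := Nat.floor_le (by positivity)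
      _ = s * 2 ^ n := mul_comm _ _
  have hl_mono : ∀ s, Monotone fun n => l n s := by
    intro s
    refine monotone_nat_of_le_succ fun n => ?_
    simp only [hldef]
    have key : (2 * ⌊2 ^ n * s⌋₊ : ℕ) ≤ ⌊2 ^ (n + 1) * s⌋₊ := by
      by_cases hs : 0 ≤ s
      · refine Nat.le_floor ?_
        push_cast
        have h1 : (⌊2 ^ n * s⌋₊ : ℝ) ≤ 2 ^ n * s := Nat.floor_le (by positivity)
        have h2 : (2:ℝ) ^ (n + 1) = 2 ^ n * 2 := pow_succ 2 n
        nlinarith [hpow n]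
      · push_neg at hs
        rw [Nat.floor_of_nonpos (by nlinarith [hpow n])]
        simp
    have key' : (2 * (⌊2 ^ n * s⌋₊ : ℝ)) ≤ (⌊2 ^ (n + 1) * s⌋₊ : ℝ) := by
      exact_mod_cast key
    rw [div_le_div_iff₀ (hpow n) (hpow (n + 1))]
    have h2 : (2:ℝ) ^ (n + 1) = 2 ^ n * 2 := pow_succ 2 n
    nlinarith [(by positivity : (0:ℝ) ≤ (⌊2 ^ n * s⌋₊ : ℝ)), hpow n]
  have hl_approx : ∀ x s : ℝ, 0 ≤ x → x < s → ∃ n, x < l n s := by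
    intro x s hx hxs
    have hs' : (0:ℝ) < s - x := by linarith
    obtain ⟨n, hn⟩ := pow_unbounded_of_one_lt ((s - x)⁻¹ : ℝ) one_lt_two
    refine ⟨n, ?_⟩
    have h1 : 2 ^ n * s - 1 < (⌊2 ^ n * s⌋₊ : ℝ) := Nat.sub_one_lt_floor _
    have h2 : (1:ℝ) < 2 ^ n * (s - x) := by
      have := mul_lt_mul_of_pos_right hn hs'
      rwa [inv_mul_cancel₀ (ne_of_gt hs')] at this
    simp only [hldef]
    rw [lt_div_iff₀ (hpow n)]
    nlinarith
  have hl_measR : ∀ n, Measurable (l n) := by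
    intro n
    refine Monotone.measurable fun x y hxy => ?_
    simp only [hldef]
    have : (⌊2 ^ n * x⌋₊ : ℝ) ≤ (⌊2 ^ n * y⌋₊ : ℝ) := by
      exact_mod_cast Nat.floor_mono (by nlinarith [hpow n])
    exact div_le_div_of_nonneg_right this (le_of_lt (hpow n))
  -- pointwise infimum identities
  have hbl_anti : ∀ (y : ℝ) {x x' : ℝ}, x ≤ x' → bl x' y ≤ bl x y := by
    intro y x x' hxx'
    simp only [hbldef]
    by_cases h : x' ≤ y
    · rw [if_pos h, if_pos (le_trans hxx' h)]
    · rw [if_neg h]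
      exact zero_le
  have hbl_inf : ∀ (ω : Ω) (s : ℝ), (⨅ n, bl (l n s) (C ω)) = bl s (C ω) := by
    intro ω s
    by_cases h : s ≤ C ω
    · have hall : ∀ n, bl (l n s) (C ω) = 1 := by
        intro n
        have hls : l n s ≤ C ω := by
          rcases le_or_gt 0 s with hs | hs
          · exact le_trans (hl_le n s hs) h
          · rw [hl_zero n s hs]; exact hCpos ω
        simp only [hbldef, if_pos hls]
      rw [show bl s (C ω) = 1 from by simp only [hbldef]; exact if_pos h]
      simp only [hall, iInf_const]
    · push_neg at h
      obtain ⟨n0, hn0⟩ := hl_approx (C ω) s (hCpos ω) h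
      have h1 : bl (l n0 s) (C ω) = 0 := by
        simp only [hbldef, if_neg (not_le.mpr hn0)]
      have h2 : bl s (C ω) = 0 := by
        simp only [hbldef, if_neg (not_le.mpr h)]
      rw [h2]
      exact le_antisymm (le_trans (iInf_le _ n0) (le_of_eq h1)) zero_le
  have hphi : ∀ (ω : Ω) (s : ℝ), (⨅ n, bl (l n s) (C ω) * Wf s) = bl s (C ω) * Wf s := by
    intro ω s
    calc (⨅ n, bl (l n s) (C ω) * Wf s)
        = (⨅ n, bl (l n s) (C ω)) * Wf s :=
          (ENNReal.iInf_mul fun hc => absurd hc (hWne s)).symm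
      _ = bl s (C ω) * Wf s := by rw [hbl_inf]
  have hQl_inf : ∀ s : ℝ, (⨅ n, (1 - Q (l n s)) * Wf s) = (1 - Q s) * Wf s := by
    intro s
    have hUnion : (⋃ n, {ω | C ω < l n s}) = {ω | C ω < s} := by
      ext ω
      simp only [Set.mem_iUnion, Set.mem_setOf_eq]
      constructor
      · rintro ⟨n, hn⟩
        rcases le_or_gt 0 s with hs | hs
        · exact lt_of_lt_of_le hn (hl_le n s hs)
        · rw [hl_zero n s hs] at hn
          exact absurd hn (not_lt.mpr (hCpos ω))
      · intro hω
        exact hl_approx (C ω) s (hCpos ω) hω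
    have hsup : (⨆ n, Q (l n s)) = Q s := by
      have hmono : Monotone fun n => {ω | C ω < l n s} := by
        intro n m hnm ω hω
        exact lt_of_lt_of_le hω (hl_mono s hnm)
      rw [hQdef]
      calc (⨆ n, P {ω | C ω < l n s}) = P (⋃ n, {ω | C ω < l n s}) :=
            (hmono.directed_le.measure_iUnion).symm
        _ = P {ω | C ω < s} := by rw [hUnion]
    calc (⨅ n, (1 - Q (l n s)) * Wf s)
        = (⨅ n, (1 - Q (l n s))) * Wf s :=
          (ENNReal.iInf_mul fun hc => absurd hc (hWne s)).symm
      _ = (1 - ⨆ n, Q (l n s)) * Wf s := by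
          rw [ENNReal.sub_iSup ENNReal.one_ne_top]
      _ = (1 - Q s) * Wf s := by rw [hsup]
  
  -- partition of ℝ along the dyadic grid
  have hfloor_meas : ∀ n, Measurable fun s : ℝ => (⌊2 ^ n * s⌋₊ : ℝ) := by
    intro n
    refine Monotone.measurable fun x y hxy => ?_
    exact_mod_cast Nat.floor_mono (by nlinarith [hpow n])
  set c : ℕ → ℕ → ℝ := fun n k => (k : ℝ) / 2 ^ n with hcdef
  set Es : ℕ → ℕ → Set ℝ := fun n k => {s | (⌊2 ^ n * s⌋₊ : ℝ) = (k : ℝ)} with hEdef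
  set a : ℕ → ℕ → Ω → ℝ≥0∞ := fun n k ω => ∫⁻ s in Es n k, Wf s ∂μr ω with hadef
  have hEs_meas : ∀ n k, MeasurableSet (Es n k) := fun n k =>
    hfloor_meas n (measurableSet_singleton ((k : ℕ) : ℝ))
  have hEs_disj : ∀ n, Pairwise (Function.onFun Disjoint (Es n)) := by
    intro n k k' hkk'
    refine Set.disjoint_left.mpr fun s hs hs' => hkk' ?_
    exact_mod_cast (hs.symm.trans hs' : ((k:ℝ) = (k':ℝ)))
  have hEs_union : ∀ n, (⋃ k, Es n k) = Set.univ := by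
    intro n
    refine Set.eq_univ_of_forall fun s => Set.mem_iUnion.mpr ⟨⌊2 ^ n * s⌋₊, rfl⟩
  have hEs_l : ∀ n k (s : ℝ), s ∈ Es n k → l n s = c n k := by
    intro n k s hs
    simp only [hldef, hcdef]
    rw [hs]
  have hpart : ∀ (n : ℕ) (ω : Ω) (h : ℝ → ℝ≥0∞),
      ∫⁻ s, h s ∂μr ω = ∑' k, ∫⁻ s in Es n k, h s ∂μr ω := by
    intro n ω h
    conv_lhs => rw [← setLIntegral_univ (μ := μr ω) h, ← hEs_union n]
    rw [lintegral_iUnion (hEs_meas n) (hEs_disj n)]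
  have ha_measG : ∀ n k, Measurable[G] (a n k) := by
    intro n k
    have heq : a n k = fun ω => ∫⁻ s, (Es n k).indicator Wf s ∂μr ω := by
      funext ω
      rw [lintegral_indicator (hEs_meas n k)]
    rw [heq]
    exact hμlint (hWmeas.indicator (hEs_meas n k))
  have hbl_measω : ∀ x : ℝ, Measurable fun ω => bl x (C ω) := by
    intro x
    simp only [hbldef]
    exact Measurable.ite (measurableSet_le measurable_const hC)
      measurable_const measurable_const
  have hasum1 : ∀ n ω, inner1 n ω = ∑' k, bl (c n k) (C ω) * a n k ω := by
    intro n ω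
    rw [hi1def]
    simp only
    rw [hpart n ω _]
    refine tsum_congr fun k => ?_
    rw [setLIntegral_congr_fun (hEs_meas n k)
      (fun s hs => by rw [hEs_l n k s hs])]
    exact lintegral_const_mul _ hWmeas
  have hasum2 : ∀ n ω, inner2 n ω = ∑' k, (1 - Q (c n k)) * a n k ω := by
    intro n ω
    rw [hi2def]
    simp only
    rw [hpart n ω _]
    refine tsum_congr fun k => ?_
    rw [setLIntegral_congr_fun (hEs_meas n k)
      (fun s hs => by rw [hEs_l n k s hs])]
    exact lintegral_const_mul _ hWmeas
  have hinner1_meas : ∀ n, Measurable (inner1 n) := by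
    intro n
    have heq : inner1 n = fun ω => ∑' k, bl (c n k) (C ω) * a n k ω := funext (hasum1 n)
    rw [heq]
    exact Measurable.ennreal_tsum fun k =>
      (hbl_measω _).mul ((ha_measG n k).mono hG le_rfl)
  have hinner2_measG : ∀ n, Measurable[G] (inner2 n) := by
    intro n
    exact hμlint ((measurable_const.sub (hQmeas.comp (hl_measR n))).mul hWmeas)
  -- the key per-n identity
  have hLM : ∀ (A : Set Ω), MeasurableSet[G] A → ∀ n,
      ∫⁻ ω in A, inner1 n ω ∂P = ∫⁻ ω in A, inner2 n ω ∂P := by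
    intro A hA n
    have hAm0 : MeasurableSet A := hG A hA
    calc ∫⁻ ω in A, inner1 n ω ∂P
        = ∑' k, ∫⁻ ω in A, bl (c n k) (C ω) * a n k ω ∂P := by
          rw [lintegral_congr fun ω => hasum1 n ω]
          exact lintegral_tsum fun k =>
            ((hbl_measω _).mul ((ha_measG n k).mono hG le_rfl)).aemeasurable
      _ = ∑' k, ∫⁻ ω in A, (1 - Q (c n k)) * a n k ω ∂P := by
          refine tsum_congr fun k => ?_
          by_cases hck : c n k ≤ t
          · have hc0 : 0 ≤ c n k := by simp only [hcdef]; positivity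
            have step : ∫⁻ ω in A, bl (c n k) (C ω) * a n k ω ∂P
                = ∫⁻ ω in {ω | c n k ≤ C ω}, A.indicator (a n k) ω ∂P := by
              rw [← lintegral_indicator hAm0,
                ← lintegral_indicator (measurableSet_le measurable_const hC)]
              refine lintegral_congr fun ω => ?_
              by_cases h1 : ω ∈ A <;> by_cases h2 : c n k ≤ C ω <;>
                simp [hbldef, h1, h2, Set.indicator_apply]
            have hofReal : ENNReal.ofReal (1 - (P {ω | C ω < c n k}).toReal)
                = 1 - Q (c n k) := by
              rw [ENNReal.ofReal_sub 1 ENNReal.toReal_nonneg, ENNReal.ofReal_one,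
                ENNReal.ofReal_toReal (hQne (c n k))]
            rw [step, hcens' (c n k) ⟨hc0, hck⟩ _ ((ha_measG n k).indicator hA),
              hofReal, lintegral_indicator hAm0,
              ← lintegral_const_mul _ ((ha_measG n k).mono hG le_rfl)]
          · have hz : ∀ ω, a n k ω = 0 := by
              intro ω
              have hE0 : μr ω (Es n k) = 0 := by
                simp only [hμrdef]
                rw [Measure.restrict_apply (hEs_meas n k)]
                have : Es n k ∩ Set.Icc 0 t = ∅ := by
                  ext s
                  simp only [Set.mem_inter_iff, Set.mem_empty_iff_false, iff_false,
                    not_and]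
                  intro hsE hsI
                  have h1 : l n s = c n k := hEs_l n k s hsE
                  have h2 : l n s ≤ s := hl_le n s hsI.1
                  exact hck (le_trans (h1 ▸ h2) hsI.2)
                rw [this, measure_empty]
              simp only [hadef]
              exact setLIntegral_measure_zero _ _ hE0
            simp [hz]
      _ = ∫⁻ ω in A, inner2 n ω ∂P := by
          rw [← lintegral_tsum (f := fun k ω => (1 - Q (c n k)) * a n k ω) fun k =>
            ((measurable_const.mul ((ha_measG n k).mono hG le_rfl))).aemeasurable]
          exact lintegral_congr fun ω => (hasum2 n ω).symm
  
  -- monotone limits (in n)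
  have hmeas_f1 : ∀ (ω : Ω) (n : ℕ), Measurable fun s => bl (l n s) (C ω) * Wf s := by
    intro ω n
    refine Measurable.mul ?_ hWmeas
    simp only [hbldef]
    exact Measurable.ite (measurableSet_le (hl_measR n) measurable_const)
      measurable_const measurable_const
  have hmeas_f2 : ∀ n : ℕ, Measurable fun s => (1 - Q (l n s)) * Wf s := fun n =>
    (measurable_const.sub (hQmeas.comp (hl_measR n))).mul hWmeas
  have hble_one : ∀ x y : ℝ, bl x y ≤ 1 := by
    intro x y
    simp only [hbldef]
    split <;> simp
  have hanti1 : ∀ ω : Ω, Antitone fun (n : ℕ) (s : ℝ) => bl (l n s) (C ω) * Wf s := by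
    intro ω n m hnm s
    exact mul_le_mul_left (hbl_anti (C ω) (hl_mono s hnm)) _
  have hanti2 : Antitone fun (n : ℕ) (s : ℝ) => (1 - Q (l n s)) * Wf s := by
    intro n m hnm s
    exact mul_le_mul_left (tsub_le_tsub_left (hQmono (hl_mono s hnm)) 1) _
  have hfin1 : ∀ᵐ ω ∂P, (⨅ n, inner1 n ω) = YL ω := by
    filter_upwards [hNae] with ω hω
    have hfin : ∫⁻ s, bl (l 0 s) (C ω) * Wf s ∂μr ω ≠ ∞ := by
      refine ne_of_lt (lt_of_le_of_lt (hIbound ω _ fun s => ?_)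
        (ENNReal.mul_lt_top (hWne t).lt_top hω.lt_top))
      calc bl (l 0 s) (C ω) * Wf s ≤ 1 * Wf s := mul_le_mul_left (hble_one _ _) _
        _ = Wf s := one_mul _
    calc (⨅ n, inner1 n ω)
        = ∫⁻ s, ⨅ n, bl (l n s) (C ω) * Wf s ∂μr ω :=
          (lintegral_iInf (hmeas_f1 ω) (hanti1 ω) hfin).symm
      _ = YL ω := lintegral_congr fun s => hphi ω s
  have hfin2 : ∀ᵐ ω ∂P, (⨅ n, inner2 n ω) = ν ω (Set.Icc 0 t) := by
    filter_upwards [hNae] with ω hω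
    have hfin : ∫⁻ s, (1 - Q (l 0 s)) * Wf s ∂μr ω ≠ ∞ := by
      refine ne_of_lt (lt_of_le_of_lt (hIbound ω _ fun s => ?_)
        (ENNReal.mul_lt_top (hWne t).lt_top hω.lt_top))
      calc (1 - Q (l 0 s)) * Wf s ≤ 1 * Wf s :=
            mul_le_mul_left tsub_le_self _
        _ = Wf s := one_mul _
    calc (⨅ n, inner2 n ω)
        = ∫⁻ s, ⨅ n, (1 - Q (l n s)) * Wf s ∂μr ω :=
          (lintegral_iInf hmeas_f2 hanti2 hfin).symm
      _ = ∫⁻ s, (1 - Q s) * Wf s ∂μr ω := lintegral_congr fun s => hQl_inf s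
      _ = ∫⁻ _, 1 ∂μr ω := by
          refine lintegral_congr_ae (((ae_restrict_mem measurableSet_Icc).mono
            fun s hs => ?_))
          exact hone s hs
      _ = ν ω (Set.Icc 0 t) := by rw [lintegral_one, Measure.restrict_apply_univ]
  -- a.e.-measurability of YL
  have hYLaem : AEMeasurable YL P := by
    refine AEMeasurable.congr ?_ hfin1
    exact (Measurable.iInf fun n => hinner1_meas n).aemeasurable
  refine ⟨hYLaem, ?_⟩
  -- outer limit: conclude
  intro A hA
  have hAm0 : MeasurableSet A := hG A hA
  have hinner1_bound : ∀ n ω, inner1 n ω ≤ Wf t * ν ω (Set.Icc 0 t) := by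
    intro n ω
    refine hIbound ω _ fun s => ?_
    calc bl (l n s) (C ω) * Wf s ≤ 1 * Wf s := mul_le_mul_left (hble_one _ _) _
      _ = Wf s := one_mul _
  have hinner2_bound : ∀ n ω, inner2 n ω ≤ Wf t * ν ω (Set.Icc 0 t) := by
    intro n ω
    refine hIbound ω _ fun s => ?_
    calc (1 - Q (l n s)) * Wf s ≤ 1 * Wf s :=
          mul_le_mul_left tsub_le_self _
      _ = Wf s := one_mul _
  have htot : ∫⁻ ω in A, Wf t * ν ω (Set.Icc 0 t) ∂P ≠ ∞ := by
    refine ne_of_lt (lt_of_le_of_lt (lintegral_mono' Measure.restrict_le_self le_rfl) ?_)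
    rw [lintegral_const_mul _ (hν _ measurableSet_Icc)]
    exact ENNReal.mul_lt_top (hWne t).lt_top hNint
  have houter1 : ∫⁻ ω in A, YL ω ∂P = ⨅ n, ∫⁻ ω in A, inner1 n ω ∂P := by
    rw [← lintegral_congr_ae (ae_restrict_of_ae hfin1)]
    refine lintegral_iInf (fun n => hinner1_meas n)
      (fun n m hnm ω => ?_) ?_
    · exact lintegral_mono fun s => hanti1 ω hnm s
    · exact ne_of_lt (lt_of_le_of_lt (lintegral_mono fun ω => hinner1_bound 0 ω)
        (lt_of_le_of_ne le_top htot))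
  have houter2 : ∫⁻ ω in A, ν ω (Set.Icc 0 t) ∂P = ⨅ n, ∫⁻ ω in A, inner2 n ω ∂P := by
    rw [← lintegral_congr_ae (ae_restrict_of_ae hfin2)]
    refine lintegral_iInf (fun n => (hinner2_measG n).mono hG le_rfl)
      (fun n m hnm ω => ?_) ?_
    · exact lintegral_mono fun s => hanti2 hnm s
    · exact ne_of_lt (lt_of_le_of_lt (lintegral_mono fun ω => hinner2_bound 0 ω)
        (lt_of_le_of_ne le_top htot))
  rw [houter1, houter2]
  exact iInf_congr fun n => hLM A hA n

lemma condexp_eq_of_setIntegral_eq {Ω : Type*} {m : MeasurableSpace Ω}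
    [m0 : MeasurableSpace Ω] (P : Measure Ω) [IsProbabilityMeasure P] (hm : m ≤ m0)
    {Y N : Ω → ℝ} (hY : Integrable Y P) (hN : Integrable N P)
    (heq : ∀ E : Set Ω, MeasurableSet[m] E → ∫ ω in E, Y ω ∂P = ∫ ω in E, N ω ∂P) :
    P[Y|m] =ᵐ[P] P[N|m] := by
  haveI : SigmaFinite (P.trim hm) := inferInstance
  have h := ae_eq_condExp_of_forall_setIntegral_eq hm hY
    (fun E hE hPE => integrable_condExp.integrableOn)
    (fun E hE hPE => by rw [setIntegral_condExp hm hN hE, ← heq E hE])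
    (StronglyMeasurable.aestronglyMeasurable stronglyMeasurable_condExp)
  exact h.symm

/-- Conditional unbiasedness of the rescaled process given the linear index:
under the censoring condition `E[1{C ≥ s} | σ(ν, D, Z)] = 1 − G(s⁻)` for all `s ∈ [0, t]`,
the rescaled process `Y(t) = ∫_{[0,t]} 1{s ≤ C} (1 − G(s⁻))⁻¹ ν(ds)` satisfies, for every
`θ ∈ ℝ^d`, `E[Y(t) | σ(θ'Z)] = E[ν([0,t]) | σ(θ'Z)]` a.s. -/
theorem rescaled_process_unbiased_index
    {Ω : Type*} [MeasurableSpace Ω] (P : Measure Ω) [IsProbabilityMeasure P]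
    {d : ℕ} (Z : Ω → (Fin d → ℝ)) (hZ : Measurable Z)
    (ν : Ω → Measure ℝ)
    (hν : ∀ B : Set ℝ, MeasurableSet B → Measurable (fun ω => ν ω B))
    (D : Ω → ℝ) (hD : Measurable D) (hDpos : ∀ ω, 0 ≤ D ω)
    (C : Ω → ℝ) (hC : Measurable C) (hCpos : ∀ ω, 0 ≤ C ω)
    -- `ν_ω` is supported on `[0, D(ω)]` for `P`-a.e. `ω`
    (hsupp : ∀ᵐ ω ∂P, ν ω (Set.Icc 0 (D ω))ᶜ = 0)
    (t : ℝ) (ht : 0 ≤ t)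
    -- `G(s⁻) < 1` for every `s ∈ [0, t]`
    (hGlt : ∀ s ∈ Set.Icc 0 t, (P {ω | C ω < s}).toReal < 1)
    -- `E[ν([0, t])] < ∞`
    (hNint : ∫⁻ ω, ν ω (Set.Icc 0 t) ∂P < ⊤)
    -- censoring condition: for every `s ∈ [0, t]`,
    -- `E[1{C ≥ s} | σ(ν, D, Z)] = 1 − G(s⁻)` a.s.
    (hcens : ∀ s ∈ Set.Icc 0 t,
      P[Set.indicator {ω | s ≤ C ω} (fun _ => (1 : ℝ)) |
          (MeasurableSpace.comap D inferInstance ⊔ MeasurableSpace.comap Z inferInstance) ⊔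
            ⨆ (B : Set ℝ) (_ : MeasurableSet B),
              MeasurableSpace.comap (fun ω => ν ω B) inferInstance]
        =ᵐ[P] fun _ => 1 - (P {ω | C ω < s}).toReal) :
    ∀ θ : Fin d → ℝ,
      P[fun ω => ∫ s in Set.Icc 0 t,
            (if s ≤ C ω then (1 - (P {ω' | C ω' < s}).toReal)⁻¹ else 0) ∂(ν ω) |
          MeasurableSpace.comap (fun ω => θ ⬝ᵥ Z ω) inferInstance]
        =ᵐ[P]
        P[fun ω => (ν ω (Set.Icc 0 t)).toReal |
          MeasurableSpace.comap (fun ω => θ ⬝ᵥ Z ω) inferInstance] := by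
  intro θ
  have hθZ : Measurable fun ω => θ ⬝ᵥ Z ω := by
    have hdot : Measurable fun v : Fin d → ℝ => θ ⬝ᵥ v := by
      simp only [dotProduct]
      exact Finset.measurable_sum _ fun i _ => (measurable_pi_apply i).const_mul _
    exact hdot.comp hZ
  have hmθ : MeasurableSpace.comap (fun ω => θ ⬝ᵥ Z ω) inferInstance ≤
      (inferInstance : MeasurableSpace Ω) := hθZ.comap_le
  have h𝒢le : ((MeasurableSpace.comap D inferInstance ⊔ MeasurableSpace.comap Z inferInstance) ⊔
      ⨆ (B : Set ℝ) (_ : MeasurableSet B),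
        MeasurableSpace.comap (fun ω => ν ω B) inferInstance)
      ≤ (inferInstance : MeasurableSpace Ω) :=
    sup_le (sup_le hD.comap_le hZ.comap_le) (iSup₂_le fun B hB => (hν B hB).comap_le)
  have hmθG : MeasurableSpace.comap (fun ω => θ ⬝ᵥ Z ω) inferInstance ≤
      ((MeasurableSpace.comap D inferInstance ⊔ MeasurableSpace.comap Z inferInstance) ⊔
      ⨆ (B : Set ℝ) (_ : MeasurableSet B),
        MeasurableSpace.comap (fun ω => ν ω B) inferInstance) := by
    have hdot : Measurable fun v : Fin d → ℝ => θ ⬝ᵥ v := by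
      simp only [dotProduct]
      exact Finset.measurable_sum _ fun i _ => (measurable_pi_apply i).const_mul _
    have h1 : MeasurableSpace.comap (fun ω => θ ⬝ᵥ Z ω) inferInstance
        = MeasurableSpace.comap Z (MeasurableSpace.comap (fun v => θ ⬝ᵥ v) inferInstance) := by
      rw [MeasurableSpace.comap_comp]; rfl
    rw [h1]
    exact le_trans (MeasurableSpace.comap_mono (measurable_iff_comap_le.mp hdot))
      (le_trans le_sup_right le_sup_left)
  have hνG : ∀ B : Set ℝ, MeasurableSet B →
      Measurable[((MeasurableSpace.comap D inferInstance ⊔ MeasurableSpace.comap Z inferInstance) ⊔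
      ⨆ (B : Set ℝ) (_ : MeasurableSet B),
        MeasurableSpace.comap (fun ω => ν ω B) inferInstance)] fun ω => ν ω B := by
    intro B hB
    refine Measurable.of_comap_le (le_trans ?_ le_sup_right)
    exact le_iSup₂ (f := fun (B : Set ℝ) (_ : MeasurableSet B) =>
      MeasurableSpace.comap (fun ω => ν ω B) inferInstance) B hB
  -- the censoring condition, in `lintegral` form
  have hcens' : ∀ s ∈ Set.Icc 0 t, ∀ g : Ω → ℝ≥0∞,
      Measurable[((MeasurableSpace.comap D inferInstance ⊔ MeasurableSpace.comap Z inferInstance) ⊔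
      ⨆ (B : Set ℝ) (_ : MeasurableSet B),
        MeasurableSpace.comap (fun ω => ν ω B) inferInstance)] g →
      ∫⁻ ω in {ω | s ≤ C ω}, g ω ∂P
        = ENNReal.ofReal (1 - (P {ω | C ω < s}).toReal) * ∫⁻ ω, g ω ∂P := by
    intro s hs g hg
    refine cens_lintegral P h𝒢le (measurableSet_le measurable_const hC) ?_ (hcens s hs) hg
    have := hGlt s hs
    linarith
  obtain ⟨hYLaem, hkey⟩ := key_identity h𝒢le P hν hνG hC hCpos ht hGlt hNint hcens'
  set Yb : Ω → ℝ≥0∞ := fun ω => ∫⁻ s, (if s ≤ C ω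
      then ENNReal.ofReal ((1 - (P {ω' | C ω' < s}).toReal)⁻¹) else 0)
      ∂((ν ω).restrict (Set.Icc 0 t)) with hYbdef
  -- the Bochner integral in the statement is the `toReal` of `Yb`
  have hYeq : (fun ω => ∫ s in Set.Icc 0 t,
      (if s ≤ C ω then (1 - (P {ω' | C ω' < s}).toReal)⁻¹ else 0) ∂(ν ω))
      = fun ω => (Yb ω).toReal := by
    funext ω
    have hnn : 0 ≤ᵐ[(ν ω).restrict (Set.Icc 0 t)] fun s =>
        (if s ≤ C ω then (1 - (P {ω' | C ω' < s}).toReal)⁻¹ else 0) := by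
      refine ae_of_all _ fun s => ?_
      simp only [Pi.zero_apply]
      by_cases h : s ≤ C ω
      · rw [if_pos h]
        refine inv_nonneg.mpr ?_
        have h1 : (P {ω' | C ω' < s}).toReal ≤ 1 := by
          have h2 : P {ω' | C ω' < s} ≤ 1 := prob_le_one
          calc (P {ω' | C ω' < s}).toReal ≤ (1 : ℝ≥0∞).toReal :=
                ENNReal.toReal_mono ENNReal.one_ne_top h2
            _ = 1 := by simp
        linarith
      · rw [if_neg h]
    have hsm : AEStronglyMeasurable (fun s =>
        (if s ≤ C ω then (1 - (P {ω' | C ω' < s}).toReal)⁻¹ else 0))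
        ((ν ω).restrict (Set.Icc 0 t)) := by
      refine Measurable.aestronglyMeasurable ?_
      refine Measurable.ite (measurableSet_le measurable_id measurable_const) ?_
        measurable_const
      have hQmono : Monotone fun x : ℝ => P {ω' | C ω' < x} := fun x y hxy =>
        measure_mono fun ω' (hω' : C ω' < x) => lt_of_lt_of_le hω' hxy
      exact (measurable_const.sub
        (ENNReal.measurable_toReal.comp hQmono.measurable)).inv
    rw [integral_eq_lintegral_of_nonneg_ae hnn hsm]
    congr 1
    refine lintegral_congr fun s => ?_
    by_cases h : s ≤ C ω <;> simp [h]
  -- integrability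
  have hYb_le : ∀ ω, Yb ω ≤ ENNReal.ofReal ((1 - (P {ω' | C ω' < t}).toReal)⁻¹)
      * ν ω (Set.Icc 0 t) := by
    intro ω
    calc Yb ω ≤ ∫⁻ _ in Set.Icc 0 t,
          ENNReal.ofReal ((1 - (P {ω' | C ω' < t}).toReal)⁻¹) ∂(ν ω) := by
          refine lintegral_mono_ae (((ae_restrict_mem measurableSet_Icc).mono
            fun s hs => ?_))
          by_cases h : s ≤ C ω
          · rw [if_pos h]
            refine ENNReal.ofReal_le_ofReal ?_
            have h1 : 0 < 1 - (P {ω' | C ω' < t}).toReal := by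
              have := hGlt t ⟨ht, le_rfl⟩
              linarith
            have h2 : (P {ω' | C ω' < s}).toReal ≤ (P {ω' | C ω' < t}).toReal :=
              ENNReal.toReal_mono (measure_ne_top P _)
                (measure_mono fun ω' hω' => lt_of_lt_of_le hω' hs.2)
            exact inv_anti₀ h1 (by linarith)
          · rw [if_neg h]
            exact zero_le
      _ = ENNReal.ofReal ((1 - (P {ω' | C ω' < t}).toReal)⁻¹) * ν ω (Set.Icc 0 t) := by
          rw [lintegral_const, Measure.restrict_apply_univ]
  have hYbint : ∫⁻ ω, Yb ω ∂P ≠ ∞ := by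
    refine ne_of_lt (lt_of_le_of_lt (lintegral_mono hYb_le) ?_)
    rw [lintegral_const_mul _ (hν _ measurableSet_Icc)]
    exact ENNReal.mul_lt_top ENNReal.ofReal_lt_top hNint
  have hYr_int : Integrable (fun ω => (Yb ω).toReal) P :=
    integrable_toReal_of_lintegral_ne_top hYLaem hYbint
  have hNr_int : Integrable (fun ω => (ν ω (Set.Icc 0 t)).toReal) P :=
    integrable_toReal_of_lintegral_ne_top (hν _ measurableSet_Icc).aemeasurable hNint.ne
  -- set integrals agree
  have hseteq : ∀ E : Set Ω,
      MeasurableSet[MeasurableSpace.comap (fun ω => θ ⬝ᵥ Z ω) inferInstance] E →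
      ∫ ω in E, (Yb ω).toReal ∂P = ∫ ω in E, (ν ω (Set.Icc 0 t)).toReal ∂P := by
    intro E hE
    have hEG := hmθG E hE
    rw [integral_toReal hYLaem.restrict (ae_restrict_of_ae (ae_lt_top' hYLaem hYbint)),
      integral_toReal ((hν _ measurableSet_Icc).aemeasurable.restrict)
        (ae_restrict_of_ae (ae_lt_top (hν _ measurableSet_Icc) hNint.ne)),
      hkey E hEG]
  rw [hYeq]
  exact condexp_eq_of_setIntegral_eq P hmθ hYr_int hNr_int hseteq
end
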